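/- Let R be an algebra over a field of characteristic p > 0, let σ be a locally torsion automorphism of R, and let D be a locally nilpotent σ-derivation on R such that σD = Dσ. Then J(R[x;σ,D]) ∩ R is a nil ideal of R. -/

import Mathlib

/-- `S` is (a copy of) the Ore extension `R[x;σ,D]` of `R`: `ι : R → S` is the inclusion of
coefficients, `X ∈ S` is the variable, every element of `S` is uniquely a polynomial
`Σᵢ ι(aᵢ) * Xⁱ`, and multiplication is governed by `X * a = σ(a) * X + D(a)`. -/
structure IsOreExtension {R S : Type*} [Ring R] [Ring S]
    (σ : R → R) (D : R → R) (ι : R → S) (X : S) : Prop where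
  σ_add : ∀ a b : R, σ (a + b) = σ a + σ b
  σ_mul : ∀ a b : R, σ (a * b) = σ a * σ b
  σ_one : σ 1 = 1
  D_add : ∀ a b : R, D (a + b) = D a + D b
  D_mul : ∀ a b : R, D (a * b) = σ a * D b + D a * b
  ι_add : ∀ a b : R, ι (a + b) = ι a + ι b
  ι_mul : ∀ a b : R, ι (a * b) = ι a * ι b
  ι_one : ι 1 = 1
  X_comm : ∀ a : R, X * ι a = ι (σ a) * X + ι (D a)
  repr : ∀ s : S, ∃ c : ℕ →₀ R, s = c.sum fun i a => ι a * X ^ i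
  uniq : ∀ c : ℕ →₀ R, (c.sum fun i a => ι a * X ^ i) = 0 → c = 0

namespace OreAux

section jac
variable {S : Type*} [Ring S]

lemma quasi {x : S} (hx : x ∈ (⊥ : Ideal S).jacobson) : ∃ u : S, u * (1 - x) = 1 := by
  obtain ⟨z, hz⟩ := Ideal.mem_jacobson_iff.mp hx (-1)
  rw [Ideal.mem_bot] at hz
  refine ⟨z, ?_⟩
  have h1 : z * (1 - x) = z * -1 * x + z := by noncomm_ring
  rw [h1, ← sub_eq_zero]
  simpa using hz

lemma inv_one_sub_mul {x : S} (a : S) (hx : x ∈ (⊥ : Ideal S).jacobson) :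
    ∃ u : S, u * (1 - x * a) = 1 := by
  obtain ⟨w, hw⟩ := quasi (Ideal.mul_mem_left _ a hx)
  refine ⟨1 + x * w * a, ?_⟩
  have : (1 + x * w * a) * (1 - x * a) = (1 - x * a) + x * (w * (1 - a * x)) * a := by
    noncomm_ring
  rw [this, hw]
  noncomm_ring

lemma mul_mem_jac {x : S} (a : S) (hx : x ∈ (⊥ : Ideal S).jacobson) :
    x * a ∈ (⊥ : Ideal S).jacobson := by
  rw [Ideal.mem_jacobson_iff]
  intro y
  obtain ⟨u, hu⟩ := inv_one_sub_mul a (Ideal.mul_mem_left _ (-y) hx)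
  refine ⟨u, ?_⟩
  rw [Ideal.mem_bot, ← sub_eq_zero.mpr hu]
  noncomm_ring

lemma geom {t u : S} (hu : u * (1 - t) = 1) (k : ℕ) :
    u = (∑ j ∈ Finset.range k, t ^ j) + u * t ^ k := by
  have h1 : u = 1 + u * t := by
    rw [mul_sub, mul_one] at hu
    rw [← hu]; abel
  induction k with
  | zero => simp
  | succ k ih =>
    rw [Finset.sum_range_succ, add_assoc]
    have h2 : u * t ^ k = t ^ k + u * t ^ (k + 1) := by
      conv_lhs => rw [h1]
      rw [add_mul, one_mul, mul_assoc, ← pow_succ']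
    rw [← h2]; exact ih

end jac

end OreAux

namespace OreAux

section ore
variable {R S : Type*} [Ring R] [Ring S] {σ D : R → R} {ι : R → S} {X : S}
variable (h : IsOreExtension σ D ι X)

include h

lemma ι_zero : ι 0 = 0 := by
  have := h.ι_add 0 0
  rw [add_zero] at this
  exact right_eq_add.mp this

lemma ι_sub (a b : R) : ι (a - b) = ι a - ι b := by
  have h2 : ι (a - b) + ι b = ι a := by rw [← h.ι_add, sub_add_cancel]
  rw [← h2]; abel

lemma σ_zero : σ 0 = 0 := by
  have := h.σ_add 0 0
  rw [add_zero] at this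
  exact right_eq_add.mp this

lemma D_zero : D 0 = 0 := by
  have := h.D_add 0 0
  rw [add_zero] at this
  exact right_eq_add.mp this

lemma ι_nsmul (n : ℕ) (a : R) : ι (n • a) = n • ι a := by
  induction n with
  | zero => simpa [zero_smul] using ι_zero h
  | succ n ih => rw [succ_nsmul, succ_nsmul, h.ι_add, ih]

lemma D_iter_zero (s : ℕ) : D^[s] 0 = 0 := by
  induction s with
  | zero => rfl
  | succ s ih => rw [Function.iterate_succ_apply, D_zero h, ih]

lemma σ_iter_zero (j : ℕ) : σ^[j] (0 : R) = 0 := by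
  induction j with
  | zero => rfl
  | succ j ih => rw [Function.iterate_succ_apply, σ_zero h, ih]

lemma D_iter_eventually {m : ℕ} {a : R} (ha : D^[m] a = 0) {t : ℕ} (ht : m ≤ t) :
    D^[t] a = 0 := by
  obtain ⟨s, rfl⟩ := Nat.exists_eq_add_of_le ht
  rw [Nat.add_comm, Function.iterate_add_apply, ha, D_iter_zero h]

end ore

section ore2
variable {R S : Type*} [Ring R] [Ring S] {σ D : R → R} {ι : R → S} {X : S}
variable (h : IsOreExtension σ D ι X) (hcomm : ∀ a : R, σ (D a) = D (σ a))

include h hcomm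

lemma D_iter_comm (j : ℕ) (a : R) : D (σ^[j] a) = σ^[j] (D a) := by
  induction j generalizing a with
  | zero => rfl
  | succ j ih =>
    rw [Function.iterate_succ_apply', Function.iterate_succ_apply', ← hcomm, ih]

lemma D_iter_comm' (s j : ℕ) (a : R) : D^[s] (σ^[j] a) = σ^[j] (D^[s] a) := by
  induction s generalizing a with
  | zero => rfl
  | succ s ih =>
    rw [Function.iterate_succ_apply, Function.iterate_succ_apply,
      D_iter_comm h hcomm, ih]

lemma pow_X_mul (K : ℕ) (a : R) :
    X ^ K * ι a
      = ∑ j ∈ Finset.range (K + 1), (K.choose j) • (ι (σ^[j] (D^[K - j] a)) * X ^ j) := by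
  induction K generalizing a with
  | zero => simp
  | succ K IH =>
    have hstep : X ^ (K + 1) * ι a = X * (X ^ K * ι a) := by
      rw [pow_succ', mul_assoc]
    rw [hstep, IH, Finset.mul_sum]
    have hterm : ∀ j : ℕ, X * (K.choose j • (ι (σ^[j] (D^[K - j] a)) * X ^ j))
        = K.choose j • (ι (σ^[j + 1] (D^[K - j] a)) * X ^ (j + 1))
          + K.choose j • (ι (σ^[j] (D^[(K - j) + 1] a)) * X ^ j) := by
      intro j
      have e1 : σ (σ^[j] (D^[K - j] a)) = σ^[j + 1] (D^[K - j] a) :=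
        (Function.iterate_succ_apply' σ j _).symm
      have e2 : D (σ^[j] (D^[K - j] a)) = σ^[j] (D^[(K - j) + 1] a) := by
        rw [D_iter_comm h hcomm, ← Function.iterate_succ_apply' D]
      rw [mul_smul_comm, ← mul_assoc, h.X_comm, add_mul, mul_assoc, ← pow_succ',
        e1, e2, smul_add]
    rw [Finset.sum_congr rfl fun j _ => hterm j, Finset.sum_add_distrib]
    rw [Finset.sum_range_succ' _ (K + 1)]
    have hrhs : ∀ j : ℕ, (K + 1).choose (j + 1) • (ι (σ^[j + 1] (D^[K + 1 - (j + 1)] a)) * X ^ (j + 1))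
        = K.choose j • (ι (σ^[j + 1] (D^[K - j] a)) * X ^ (j + 1))
          + K.choose (j + 1) • (ι (σ^[j + 1] (D^[K - j] a)) * X ^ (j + 1)) := by
      intro j
      rw [Nat.succ_sub_succ, Nat.choose_succ_succ, add_smul]
    rw [Finset.sum_congr rfl fun j _ => hrhs j, Finset.sum_add_distrib]
    rw [add_assoc]
    congr 1
    -- remaining: ∑ B = ∑ C + f0
    rw [Finset.sum_range_succ' (fun j => K.choose j • (ι (σ^[j] (D^[(K - j) + 1] a)) * X ^ j)) K]
    rw [Finset.sum_range_succ (fun j => K.choose (j + 1) • (ι (σ^[j + 1] (D^[K - j] a)) * X ^ (j + 1))) K]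
    rw [Nat.choose_succ_self, zero_smul, add_zero]
    congr 1
    · refine Finset.sum_congr rfl fun j hj => ?_
      have : (K - (j + 1)) + 1 = K - j := by
        have := Finset.mem_range.mp hj; omega
      rw [this]
    · simp

lemma pow_pe_comm {p : ℕ} (hprime : p.Prime) (hpR : ∀ b : R, p • b = 0)
    {e m : ℕ} (hme : m ≤ p ^ e) {a : R} (ha : D^[m] a = 0) :
    X ^ p ^ e * ι a = ι (σ^[p ^ e] a) * X ^ p ^ e := by
  rw [pow_X_mul h hcomm, Finset.sum_range_succ]
  have hlast : (p ^ e).choose (p ^ e) • (ι (σ^[p ^ e] (D^[p ^ e - p ^ e] a)) * X ^ p ^ e)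
      = ι (σ^[p ^ e] a) * X ^ p ^ e := by
    simp
  rw [hlast, add_eq_right]
  refine Finset.sum_eq_zero fun j hj => ?_
  have hj' := Finset.mem_range.mp hj
  rcases eq_or_ne j 0 with rfl | hj0
  · have : D^[p ^ e - 0] a = 0 := by
      rw [Nat.sub_zero]
      exact D_iter_eventually h ha hme
    rw [this, σ_iter_zero h, ι_zero h, zero_mul, smul_zero]
  · obtain ⟨c, hc⟩ := hprime.dvd_choose_pow hj0 hj'.ne
    rw [hc, mul_smul]
    have : c • (ι (σ^[j] (D^[p ^ e - j] a)) * X ^ j)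
        = ι (c • σ^[j] (D^[p ^ e - j] a)) * X ^ j := by
      rw [ι_nsmul h, smul_mul_assoc]
    rw [this, ← smul_mul_assoc, ← ι_nsmul h, hpR, ι_zero h, zero_mul]

lemma pow_mul_pe_comm {p : ℕ} (hprime : p.Prime) (hpR : ∀ b : R, p • b = 0)
    {e m : ℕ} (hme : m ≤ p ^ e) (k : ℕ) {a : R} (ha : D^[m] a = 0) :
    X ^ (k * p ^ e) * ι a = ι (σ^[k * p ^ e] a) * X ^ (k * p ^ e) := by
  induction k generalizing a with
  | zero => simp
  | succ k ih =>
    have hDa : D^[m] (σ^[p ^ e] a) = 0 := by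
      rw [D_iter_comm' h hcomm, ha, σ_iter_zero h]
    have e1 : k * p ^ e + p ^ e = (k + 1) * p ^ e := by ring
    calc X ^ ((k + 1) * p ^ e) * ι a
        = X ^ (k * p ^ e) * (X ^ p ^ e * ι a) := by rw [← mul_assoc, ← pow_add, e1]
      _ = X ^ (k * p ^ e) * (ι (σ^[p ^ e] a) * X ^ p ^ e) := by
          rw [pow_pe_comm h hcomm hprime hpR hme ha]
      _ = (X ^ (k * p ^ e) * ι (σ^[p ^ e] a)) * X ^ p ^ e := by rw [mul_assoc]
      _ = (ι (σ^[k * p ^ e] (σ^[p ^ e] a)) * X ^ (k * p ^ e)) * X ^ p ^ e := by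
          rw [ih hDa]
      _ = ι (σ^[(k + 1) * p ^ e] a) * X ^ ((k + 1) * p ^ e) := by
          rw [mul_assoc, ← pow_add, ← Function.iterate_add_apply, e1]

end ore2

end OreAux

/-- If `R` is an algebra over a field of characteristic `p > 0`, `σ` is a locally torsion
automorphism of `R` and `D` is a locally nilpotent `σ`-derivation with `σD = Dσ`, then
`J(R[x;σ,D]) ∩ R` is a nil (two-sided) ideal of `R`. -/
theorem jacobson_cap_nil_of_locallyNilpotent {F R S : Type*} [Field F]
    (p : ℕ) (hp : p ≠ 0) [CharP F p]
    [Ring R] [Algebra F R] [Ring S]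
    (σ D : R → R) (ι : R → S) (X : S)
    (hOre : IsOreExtension σ D ι X) (hσ : Function.Bijective σ)
    (htor : ∀ a : R, ∃ n : ℕ, 0 < n ∧ σ^[n] a = a)
    (hnilp : ∀ a : R, ∃ m : ℕ, 0 < m ∧ D^[m] a = 0)
    (hcomm : ∀ a : R, σ (D a) = D (σ a)) :
    ∃ I : TwoSidedIdeal R,
      (∀ r : R, r ∈ I ↔ ι r ∈ (⊥ : Ideal S).jacobson) ∧ ∀ r ∈ I, IsNilpotent r := by
  classical
  refine ⟨TwoSidedIdeal.mk' {r : R | ι r ∈ (⊥ : Ideal S).jacobson}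
    (by simp only [Set.mem_setOf_eq, OreAux.ι_zero hOre]; exact Ideal.zero_mem _)
    (fun {x y} hx hy => by
      simp only [Set.mem_setOf_eq, hOre.ι_add] at *; exact Ideal.add_mem _ hx hy)
    (fun {x} hx => by
      simp only [Set.mem_setOf_eq] at *
      have : ι (-x) = -(ι x) := by
        have := OreAux.ι_sub hOre 0 x
        rwa [zero_sub, OreAux.ι_zero hOre, zero_sub] at this
      rw [this]; exact neg_mem hx)
    (fun {x y} hy => by
      simp only [Set.mem_setOf_eq, hOre.ι_mul] at *; exact Ideal.mul_mem_left _ _ hy)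
    (fun {x y} hx => by
      simp only [Set.mem_setOf_eq, hOre.ι_mul] at *; exact OreAux.mul_mem_jac _ hx),
    fun r => TwoSidedIdeal.mem_mk' _ _ _ _ _ _ r, ?_⟩
  intro r hr
  rw [TwoSidedIdeal.mem_mk'] at hr
  replace hr : ι r ∈ (⊥ : Ideal S).jacobson := hr
  obtain ⟨n, hn, hσn⟩ := htor r
  obtain ⟨m, hm, hDm⟩ := hnilp r
  have hprime : p.Prime := (CharP.char_is_prime_or_zero F p).resolve_right hp
  have hpR : ∀ b : R, p • b = 0 := by
    intro b
    have h0 : ((p : ℕ) : R) = 0 := by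
      rw [← map_natCast (algebraMap F R) p, CharP.cast_eq_zero F p, map_zero]
    rw [nsmul_eq_mul, h0, zero_mul]
  have hme : m ≤ p ^ m := (Nat.lt_pow_self (n := m) hprime.one_lt).le
  set N := n * p ^ m with hN
  have hNpos : 0 < N := Nat.mul_pos hn (pow_pos hprime.pos m)
  have hXN : ∀ j : ℕ, X ^ (N * j) * ι r = ι r * X ^ (N * j) := by
    intro j
    have e1 : N * j = (n * j) * p ^ m := by rw [hN]; ring
    have e2 : σ^[(n * j) * p ^ m] r = r := by
      have e3 : (n * j) * p ^ m = n * (j * p ^ m) := by ring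
      rw [e3, Function.iterate_mul]
      exact Function.iterate_fixed hσn _
    rw [e1, OreAux.pow_mul_pe_comm hOre hcomm hprime hpR hme _ hDm, e2]
  set t := ι r * X ^ N with ht
  have htJ : t ∈ (⊥ : Ideal S).jacobson := by
    have h1 := Ideal.mul_mem_left _ (X ^ N) hr
    have h2 := hXN 1
    rw [mul_one] at h2
    rwa [h2] at h1
  have tpow : ∀ j : ℕ, t ^ j = ι (r ^ j) * X ^ (N * j) := by
    intro j
    induction j with
    | zero => simp [hOre.ι_one]
    | succ j ih =>
      calc t ^ (j + 1) = (ι (r ^ j) * X ^ (N * j)) * (ι r * X ^ N) := by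
            rw [pow_succ, ih]
        _ = ι (r ^ j) * ((X ^ (N * j) * ι r) * X ^ N) := by
            rw [mul_assoc (ι (r ^ j)), mul_assoc (X ^ (N * j))]
        _ = ι (r ^ j) * ((ι r * X ^ (N * j)) * X ^ N) := by rw [hXN j]
        _ = (ι (r ^ j) * ι r) * (X ^ (N * j) * X ^ N) := by
            rw [← mul_assoc, ← mul_assoc, mul_assoc (ι (r ^ j) * ι r)]
        _ = ι (r ^ (j + 1)) * X ^ (N * (j + 1)) := by
            rw [← hOre.ι_mul, ← pow_succ, ← pow_add, ← Nat.mul_succ]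
  obtain ⟨u, hu⟩ := OreAux.quasi htJ
  obtain ⟨c, hcu⟩ := hOre.repr u
  set k := c.support.sup id + 1 with hk
  have hgeom := OreAux.geom hu (k + 1)
  obtain ⟨d, hd⟩ := hOre.repr (u * ι (r ^ (k + 1)))
  set L := N * (k + 1) with hL
  have hmain : u = (∑ j ∈ Finset.range (k + 1), ι (r ^ j) * X ^ (N * j))
      + (u * ι (r ^ (k + 1))) * X ^ L := by
    calc u = (∑ j ∈ Finset.range (k + 1), t ^ j) + u * t ^ (k + 1) := hgeom
      _ = (∑ j ∈ Finset.range (k + 1), ι (r ^ j) * X ^ (N * j))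
          + (u * ι (r ^ (k + 1))) * X ^ L := by
          rw [Finset.sum_congr rfl fun j _ => tpow j, tpow (k + 1), ← mul_assoc, hL]
  have h0 : ∀ i : ℕ, ι (0 : R) * X ^ i = 0 := fun i => by
    rw [OreAux.ι_zero hOre, zero_mul]
  have h1 : ∀ (i : ℕ) (b₁ b₂ : R), ι (b₁ + b₂) * X ^ i = ι b₁ * X ^ i + ι b₂ * X ^ i :=
    fun i b₁ b₂ => by rw [hOre.ι_add, add_mul]
  set c2 : ℕ →₀ R := (∑ j ∈ Finset.range (k + 1), Finsupp.single (N * j) (r ^ j))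
      + Finsupp.mapDomain (· + L) d with hc2
  have hsum2 : (c2.sum fun i a => ι a * X ^ i)
      = (∑ j ∈ Finset.range (k + 1), ι (r ^ j) * X ^ (N * j))
        + (u * ι (r ^ (k + 1))) * X ^ L := by
    rw [hc2, Finsupp.sum_add_index' h0 h1]
    congr 1
    · rw [← Finsupp.sum_finsetSum_index h0 h1]
      refine Finset.sum_congr rfl fun j _ => ?_
      rw [Finsupp.sum_single_index (h0 _)]
    · rw [Finsupp.sum_mapDomain_index h0 h1, hd, Finsupp.sum_mul]
      refine Finsupp.sum_congr fun i _ => ?_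
      rw [pow_add, mul_assoc]
  have hceq : c = c2 := by
    have hdiff : ((c - c2).sum fun i a => ι a * X ^ i) = 0 := by
      rw [Finsupp.sum_sub_index (fun i b₁ b₂ => by rw [OreAux.ι_sub hOre, sub_mul]),
        hsum2, ← hcu, ← hmain, sub_self]
    exact sub_eq_zero.mp (hOre.uniq _ hdiff)
  have hval : c (N * k) = 0 := by
    apply Finsupp.notMem_support_iff.mp
    intro hmem
    have h5 : id (N * k) ≤ c.support.sup id := Finset.le_sup hmem
    have h6 : k ≤ N * k := Nat.le_mul_of_pos_left k hNpos
    simp only [id_eq] at h5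
    omega
  have hval2 : c2 (N * k) = r ^ k := by
    rw [hc2, Finsupp.add_apply]
    have hmap : Finsupp.mapDomain (· + L) d (N * k) = 0 := by
      apply Finsupp.mapDomain_notin_range
      rintro ⟨i, hi⟩
      simp only at hi
      have h7 : N * k < N * (k + 1) := (Nat.mul_lt_mul_left hNpos).mpr (Nat.lt_succ_self k)
      omega
    rw [hmap, add_zero, Finset.sum_apply']
    rw [Finset.sum_eq_single k]
    · rw [Finsupp.single_apply, if_pos rfl]
    · intro j _ hjk
      rw [Finsupp.single_apply, if_neg]
      intro hNjk
      exact hjk (Nat.eq_of_mul_eq_mul_left hNpos hNjk)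
    · intro hk'
      exact absurd (Finset.self_mem_range_succ k) hk'
  refine ⟨k, ?_⟩
  rw [← hval2, ← hceq, hval]
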